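/- Let $X$ be the completion of $C[0,2]$ in the norm $|\|f\|| = \sup_n \frac{1}{n!}\max_{t \in \varphi^{-n}(0)}|f(t)|$, and let $A$ extend $f \mapsto f\circ\varphi$. Then the spectrum of $A$ is $\{0,1\}$, and $1$ is an eigenvalue of $A$ with one-dimensional eigenspace spanned by the constant function $\mathbb{1}$. -/

import Mathlib

/-- The tent map on `[0,1]`. -/
noncomputable def psi0 (t : ℝ) : ℝ := if t ≤ 1 / 2 then 2 * t else 2 - 2 * t

/-- The iterated tent map `ψ : [0,1] → [0,1]`: `ψ 0 = 0` and
`ψ t = 2⁻ⁿ ψ₀(2ⁿ t - 1)` for `t ∈ [2⁻ⁿ, 2⁻ⁿ⁺¹]` (here `n = -⌊log₂ t⌋`). -/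
noncomputable def psi (t : ℝ) : ℝ :=
  if t ≤ 0 then 0
  else (2 : ℝ) ^ (⌊Real.logb 2 t⌋) * psi0 ((2 : ℝ) ^ (-⌊Real.logb 2 t⌋) * t - 1)

/-- The map `φ : [0,2] → [0,2]`, `φ t = ψ t` on `[0,1]` and `φ t = ψ (2 - t)` on
`[1,2]`. -/
noncomputable def phi (t : ℝ) : ℝ := if t ≤ 1 then psi t else psi (2 - t)

/-- The level set `φ⁻⁽ⁿ⁺¹⁾(0)` inside `[0,2]` (indexing so that `Z 0 = φ⁻¹(0)`). -/
def Zlevel (n : ℕ) : Set (Set.Icc (0 : ℝ) 2) :=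
  {t : Set.Icc (0 : ℝ) 2 | phi^[n + 1] (t : ℝ) = 0}

/-- The norm `|‖f‖| = sup_{n ≥ 1} (1/n!) max_{t ∈ φ⁻ⁿ(0)} |f t|` on `C[0,2]`. -/
noncomputable def tnorm (f : C(Set.Icc (0 : ℝ) 2, ℝ)) : ℝ :=
  ⨆ n : ℕ, (((n + 1).factorial : ℝ))⁻¹ *
    sSup ((fun t : Set.Icc (0 : ℝ) 2 => |f t|) '' Zlevel n)

lemma psi0_le_one (s : ℝ) : psi0 s ≤ 1 := by
  unfold psi0; split <;> linarith

lemma psi_zero : psi 0 = 0 := by simp [psi]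

lemma psi_le_one {t : ℝ} (ht : t ≤ 1) : psi t ≤ 1 := by
  unfold psi
  split
  · norm_num
  · rename_i h
    push_neg at h
    have hlog : Real.logb 2 t ≤ 0 := Real.logb_nonpos (by norm_num) h.le ht
    have hfl : ⌊Real.logb 2 t⌋ ≤ 0 := Int.floor_nonpos hlog
    have h2 : (2:ℝ) ^ (⌊Real.logb 2 t⌋) ≤ 1 := zpow_le_one_of_nonpos₀ (by norm_num) hfl
    have h2p : (0:ℝ) < (2:ℝ) ^ (⌊Real.logb 2 t⌋) := zpow_pos (by norm_num) _
    set s := (2 : ℝ) ^ (-⌊Real.logb 2 t⌋) * t - 1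
    rcases le_or_gt (psi0 s) 0 with hs | hs
    · nlinarith
    · nlinarith [psi0_le_one s]

lemma phi_le_one {t : ℝ} (ht : t ≤ 2) : phi t ≤ 1 := by
  unfold phi; split
  · exact psi_le_one ‹_›
  · exact psi_le_one (by linarith [lt_of_not_ge ‹¬ t ≤ 1›])

lemma phi_zero : phi 0 = 0 := by simp [phi, psi_zero]
lemma phi_two : phi 2 = 0 := by norm_num [phi, psi_zero]
lemma phi_iter_zero (m : ℕ) : phi^[m] 0 = 0 := by
  induction m with
  | zero => rfl
  | succ k ih => rw [Function.iterate_succ_apply, phi_zero, ih]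
namespace Aux
abbrev I2 := Set.Icc (0 : ℝ) 2
abbrev X0 := C(I2, ℝ)
def z0 : I2 := ⟨0, by norm_num⟩
def z2 : I2 := ⟨2, by norm_num⟩
noncomputable def term (f : X0) (n : ℕ) : ℝ :=
  (((n + 1).factorial : ℝ))⁻¹ * sSup ((fun t : I2 => |f t|) '' Zlevel n)

lemma z0_mem (n : ℕ) : z0 ∈ Zlevel n := by
  show phi^[n+1] ((z0 : I2) : ℝ) = 0
  simpa [z0] using phi_iter_zero (n+1)

lemma z2_mem : z2 ∈ Zlevel 0 := by
  show phi^[1] ((z2 : I2) : ℝ) = 0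
  simpa [z2] using phi_two

lemma img_nonempty (f : X0) (n : ℕ) : ((fun t : I2 => |f t|) '' Zlevel n).Nonempty :=
  ⟨_, Set.mem_image_of_mem _ (z0_mem n)⟩

lemma img_bdd (f : X0) (n : ℕ) : BddAbove ((fun t : I2 => |f t|) '' Zlevel n) := by
  refine ⟨‖f‖, ?_⟩
  rintro y ⟨t, _, rfl⟩
  exact f.norm_coe_le_norm t

lemma sSup_img_nonneg (f : X0) (n : ℕ) :
    0 ≤ sSup ((fun t : I2 => |f t|) '' Zlevel n) :=
  le_trans (abs_nonneg _) (le_csSup (img_bdd f n) (Set.mem_image_of_mem _ (z0_mem n)))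

lemma term_nonneg (f : X0) (n : ℕ) : 0 ≤ term f n :=
  mul_nonneg (by positivity) (sSup_img_nonneg f n)

lemma term_le_norm (f : X0) (n : ℕ) : term f n ≤ ‖f‖ := by
  have h1 : sSup ((fun t : I2 => |f t|) '' Zlevel n) ≤ ‖f‖ := by
    refine Real.sSup_le ?_ (norm_nonneg f)
    rintro y ⟨t, _, rfl⟩
    exact f.norm_coe_le_norm t
  have h2 : (((n + 1).factorial : ℝ))⁻¹ ≤ 1 := by
    rw [inv_le_one_iff₀]
    right
    exact_mod_cast Nat.one_le_iff_ne_zero.mpr (Nat.factorial_ne_zero _)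
  calc term f n ≤ 1 * sSup ((fun t : I2 => |f t|) '' Zlevel n) :=
        mul_le_mul_of_nonneg_right h2 (sSup_img_nonneg f n)
    _ ≤ 1 * ‖f‖ := by simpa using h1
    _ = ‖f‖ := one_mul _

lemma bdd_range_term (f : X0) : BddAbove (Set.range (term f)) :=
  ⟨‖f‖, by rintro y ⟨n, rfl⟩; exact term_le_norm f n⟩

lemma term_le_tnorm (f : X0) (n : ℕ) : term f n ≤ tnorm f :=
  le_ciSup (bdd_range_term f) n

lemma tnorm_nonneg (f : X0) : 0 ≤ tnorm f :=
  le_trans (term_nonneg f 0) (term_le_tnorm f 0)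

lemma abs_le_fact_mul_tnorm (f : X0) {t : I2} {n : ℕ} (ht : t ∈ Zlevel n) :
    |f t| ≤ ((n + 1).factorial : ℝ) * tnorm f := by
  have h1 : |f t| ≤ sSup ((fun t : I2 => |f t|) '' Zlevel n) :=
    le_csSup (img_bdd f n) (Set.mem_image_of_mem _ ht)
  have h2 := term_le_tnorm f n
  have hp : (0:ℝ) < ((n + 1).factorial : ℝ) := by positivity
  rw [term, inv_mul_le_iff₀ hp] at h2
  exact h1.trans h2

lemma tnorm_one : tnorm (1 : X0) = 1 := by
  have himg : ∀ n, (fun t : I2 => |(1 : X0) t|) '' Zlevel n = {1} := by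
    intro n
    have : (fun t : I2 => |(1 : X0) t|) = fun _ => (1:ℝ) := by
      funext t; simp
    rw [this]
    exact Set.Nonempty.image_const ⟨z0, z0_mem n⟩ 1
  have hterm : ∀ n, term (1 : X0) n = (((n + 1).factorial : ℝ))⁻¹ := by
    intro n; rw [term, himg, csSup_singleton, mul_one]
  apply le_antisymm
  · refine ciSup_le fun n => ?_
    show term 1 n ≤ 1
    rw [hterm]
    rw [inv_le_one_iff₀]; right
    exact_mod_cast Nat.one_le_iff_ne_zero.mpr (Nat.factorial_ne_zero _)
  · have := term_le_tnorm 1 0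
    rw [hterm] at this
    simpa using this

lemma fact_ineq (k m : ℕ) : (k+1).factorial * (m+1).factorial ≤ (k+m+1).factorial := by
  induction k with
  | zero => simp [Nat.factorial]
  | succ k ih =>
      have h1 : (k+1+1).factorial = (k+2) * (k+1).factorial := rfl
      calc (k+1+1).factorial * (m+1).factorial
          = (k+2) * ((k+1).factorial * (m+1).factorial) := by rw [h1]; ring
        _ ≤ (k+2) * (k+m+1).factorial := Nat.mul_le_mul_left _ ih
        _ ≤ (k+m+2) * (k+m+1).factorial := Nat.mul_le_mul_right _ (by omega)
        _ = (k+1+m+1).factorial := by rw [show k+1+m+1 = (k+m+1)+1 by omega]; rfl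
end Aux
namespace Aux
noncomputable def Phit (phic : C(I2, I2)) : ℕ → C(I2, I2)
  | 0 => ContinuousMap.id _
  | (k+1) => phic.comp (Phit phic k)

lemma Phit_coe (phic : C(I2, I2)) (hphic : ∀ t : I2, (phic t : ℝ) = phi t)
    (k : ℕ) (t : I2) : ((Phit phic k t : I2) : ℝ) = phi^[k] (t : ℝ) := by
  induction k with
  | zero => rfl
  | succ k ih =>
      show ((phic (Phit phic k t) : I2) : ℝ) = _
      rw [hphic, ih, Function.iterate_succ_apply']

/-- Core estimate: if `g 0 = 0` then `tnorm (g ∘ φᵏ) ≤ tnorm g / (k+1)!` -/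
lemma core (phic : C(I2, I2)) (hphic : ∀ t : I2, (phic t : ℝ) = phi t)
    (g : X0) (hg : g z0 = 0) (k : ℕ) :
    tnorm (g.comp (Phit phic k)) ≤ (((k+1).factorial : ℝ))⁻¹ * tnorm g := by
  refine ciSup_le fun n => ?_
  show term (g.comp (Phit phic k)) n ≤ _
  rcases le_or_gt k n with hkn | hnk
  · -- k ≤ n : Φk maps Zlevel n into Zlevel (n-k)
    have hmem : ∀ t : I2, t ∈ Zlevel n → Phit phic k t ∈ Zlevel (n - k) := by
      intro t ht
      show phi^[n - k + 1] ((Phit phic k t : I2) : ℝ) = 0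
      rw [Phit_coe phic hphic, ← Function.iterate_add_apply]
      rw [show n - k + 1 + k = n + 1 by omega]
      exact ht
    have hS : sSup ((fun t : I2 => |(g.comp (Phit phic k)) t|) '' Zlevel n)
        ≤ ((n - k + 1).factorial : ℝ) * tnorm g := by
      refine Real.sSup_le ?_ (mul_nonneg (by positivity) (tnorm_nonneg g))
      rintro y ⟨t, ht, rfl⟩
      exact abs_le_fact_mul_tnorm g (hmem t ht)
    have hcoef : (((n+1).factorial : ℝ))⁻¹ * ((n - k + 1).factorial : ℝ)
        ≤ (((k+1).factorial : ℝ))⁻¹ := by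
      rw [inv_mul_le_iff₀ (by positivity), mul_comm, le_inv_mul_iff₀ (by positivity)]
      have := fact_ineq k (n - k)
      rw [show k + (n-k) + 1 = n + 1 by omega] at this
      exact_mod_cast this
    calc term (g.comp (Phit phic k)) n
        ≤ (((n+1).factorial : ℝ))⁻¹ * (((n - k + 1).factorial : ℝ) * tnorm g) :=
          mul_le_mul_of_nonneg_left hS (by positivity)
      _ = ((((n+1).factorial : ℝ))⁻¹ * ((n - k + 1).factorial : ℝ)) * tnorm g := by ring
      _ ≤ (((k+1).factorial : ℝ))⁻¹ * tnorm g :=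
          mul_le_mul_of_nonneg_right hcoef (tnorm_nonneg g)
  · -- n < k : the image is {0}
    have hS : sSup ((fun t : I2 => |(g.comp (Phit phic k)) t|) '' Zlevel n)
        ≤ (((k+1).factorial : ℝ))⁻¹ * tnorm g := by
      refine Real.sSup_le ?_ (mul_nonneg (by positivity) (tnorm_nonneg g))
      rintro y ⟨t, ht, rfl⟩
      have : Phit phic k t = z0 := by
        apply Subtype.ext
        rw [Phit_coe phic hphic]
        have : phi^[k] (t : ℝ) = phi^[k - (n+1)] (phi^[n+1] (t : ℝ)) := by
          rw [← Function.iterate_add_apply, show k - (n+1) + (n+1) = k by omega]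
        rw [this, ht, phi_iter_zero]
        rfl
      show |g (Phit phic k t)| ≤ _
      rw [this, hg, abs_zero]
      exact mul_nonneg (by positivity) (tnorm_nonneg g)
    have hinv : (((n+1).factorial : ℝ))⁻¹ ≤ 1 := by
      rw [inv_le_one_iff₀]; right
      exact_mod_cast Nat.one_le_iff_ne_zero.mpr (Nat.factorial_ne_zero _)
    have h0 := sSup_img_nonneg (g.comp (Phit phic k)) n
    calc term (g.comp (Phit phic k)) n
        ≤ 1 * sSup ((fun t : I2 => |(g.comp (Phit phic k)) t|) '' Zlevel n) :=
          mul_le_mul_of_nonneg_right hinv h0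
      _ ≤ (((k+1).factorial : ℝ))⁻¹ * tnorm g := by simpa using hS
end Aux
namespace Aux
noncomputable def f0 : X0 :=
  ⟨fun t => max ((t:ℝ) - 1) 0, by
    exact (continuous_subtype_val.sub continuous_const).max continuous_const⟩

lemma f0_z2 : f0 z2 = 1 := by norm_num [f0, z2]

lemma one_le_tnorm_f0 : 1 ≤ tnorm f0 := by
  have := abs_le_fact_mul_tnorm f0 z2_mem
  rw [f0_z2] at this
  simpa using this

lemma f0_comp (phic : C(I2, I2)) (hphic : ∀ t : I2, (phic t : ℝ) = phi t) :
    f0.comp phic = 0 := by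
  ext t
  show max ((phic t : ℝ) - 1) 0 = 0
  rw [hphic]
  have h2 : (t : ℝ) ≤ 2 := t.2.2
  exact max_eq_right (by linarith [phi_le_one h2])

lemma fact_inv_le (n : ℕ) : ((n+1).factorial : ℝ)⁻¹ ≤ 1 / ((n:ℝ) + 1) := by
  rw [one_div]
  apply inv_anti₀ (by positivity)
  exact_mod_cast Nat.self_le_factorial (n+1)

lemma fact_inv_tendsto : Filter.Tendsto (fun n : ℕ => ((n+1).factorial : ℝ)⁻¹)
    Filter.atTop (nhds 0) :=
  squeeze_zero (fun n => by positivity) fact_inv_le tendsto_one_div_add_atTop_nhds_zero_nat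

lemma fact_inv_anti {N n : ℕ} (h : N ≤ n) :
    ((n+1).factorial : ℝ)⁻¹ ≤ ((N+1).factorial : ℝ)⁻¹ := by
  apply inv_anti₀ (by positivity)
  exact_mod_cast Nat.factorial_le (by omega)
end Aux

open Aux Filter in
set_option maxHeartbeats 1600000 in
set_option synthInstance.maxHeartbeats 400000 in
/-- Let `X` be the completion of `C[0,2]` in the norm `|‖·‖|` (presented
abstractly via a dense lattice-isometric embedding `j`) and let `A` extend the
composition operator `f ↦ f ∘ φ`.  Then `σ(A) = {0, 1}` and `1` is an
eigenvalue of `A` with one-dimensional eigenspace spanned by `𝟙`. -/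
theorem stmt14 {X : Type*} [NormedAddCommGroup X] [Lattice X] [HasSolidNorm X]
    [IsOrderedAddMonoid X] [NormedSpace ℝ X]
    [CompleteSpace X]
    (j : C(Set.Icc (0 : ℝ) 2, ℝ) →ₗ[ℝ] X)
    (hjiso : ∀ f, ‖j f‖ = tnorm f)
    (hjlat : ∀ f, j |f| = |j f|)
    (hjdense : DenseRange j)
    (phic : C(Set.Icc (0 : ℝ) 2, Set.Icc (0 : ℝ) 2))
    (hphic : ∀ t : Set.Icc (0 : ℝ) 2, (phic t : ℝ) = phi t)
    (A : X →L[ℝ] X) (hA : ∀ f, A (j f) = j (f.comp phic)) :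
    spectrum ℝ A = {0, 1} ∧
      ∀ x : X, A x = x ↔ ∃ c : ℝ, x = c • j 1 := by
  set u : X := j 1 with hu_def
  have hnu : ‖u‖ = 1 := by rw [hu_def, hjiso]; exact tnorm_one
  have hune : u ≠ 0 := fun h => by rw [h] at hnu; simp at hnu
  have hA1 : A u = u := by rw [hu_def, hA, ContinuousMap.one_comp]
  have hAk : ∀ (k : ℕ) (f : X0), (A ^ k) (j f) = j (f.comp (Phit phic k)) := by
    intro k
    induction k with
    | zero =>
        intro f
        simp [Phit, ContinuousMap.comp_id]
    | succ k ih =>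
        intro f
        rw [pow_succ, ContinuousLinearMap.mul_apply, hA, ih,
          ContinuousMap.comp_assoc]
        rfl
  have hAku : ∀ k : ℕ, (A ^ k) u = u := by
    intro k; rw [hu_def, hAk k 1, ContinuousMap.one_comp]
  have hjg : ∀ f : X0, j f - f z0 • u = j (f - f z0 • 1) := by
    intro f; rw [map_sub, map_smul]
  have hcore : ∀ (f : X0) (k : ℕ),
      ‖(A ^ k) (j f - f z0 • u)‖ ≤ ((k+1).factorial : ℝ)⁻¹ * ‖j f - f z0 • u‖ := by
    intro f k
    rw [hjg, hAk, hjiso, hjiso]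
    exact core phic hphic _ (by simp) k
  have hcabs : ∀ f : X0, |f z0| ≤ ‖j f‖ := by
    intro f
    rw [hjiso]
    simpa using abs_le_fact_mul_tnorm f (z0_mem 0)
  have hsub : ∀ f : X0, ‖j f - f z0 • u‖ ≤ 2 * ‖j f‖ := by
    intro f
    calc ‖j f - f z0 • u‖ ≤ ‖j f‖ + ‖f z0 • u‖ := norm_sub_le _ _
      _ = ‖j f‖ + |f z0| * 1 := by rw [norm_smul, hnu, Real.norm_eq_abs]
      _ ≤ 2 * ‖j f‖ := by nlinarith [hcabs f, norm_nonneg (j f)]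
  -- pointwise Cauchy-type estimate
  have hptwise : ∀ (k m : ℕ) (x : X),
      ‖(A ^ k) x - (A ^ m) x‖
        ≤ (((k+1).factorial : ℝ)⁻¹ + ((m+1).factorial : ℝ)⁻¹) * (2 * ‖x‖) := by
    intro k m x
    refine hjdense.induction_on x ?_ ?_
    · apply isClosed_le
      · exact ((A ^ k).continuous.sub (A ^ m).continuous).norm
      · exact continuous_const.mul (continuous_const.mul continuous_norm)
    · intro f
      have e1 : (A ^ k) (j f) - (A ^ m) (j f)
          = (A ^ k) (j f - f z0 • u) - (A ^ m) (j f - f z0 • u) := by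
        simp only [map_sub, map_smul, hAku]
        abel
      rw [e1]
      calc ‖(A ^ k) (j f - f z0 • u) - (A ^ m) (j f - f z0 • u)‖
          ≤ ‖(A ^ k) (j f - f z0 • u)‖ + ‖(A ^ m) (j f - f z0 • u)‖ := norm_sub_le _ _
        _ ≤ ((k+1).factorial : ℝ)⁻¹ * ‖j f - f z0 • u‖
            + ((m+1).factorial : ℝ)⁻¹ * ‖j f - f z0 • u‖ :=
            add_le_add (hcore f k) (hcore f m)
        _ = (((k+1).factorial : ℝ)⁻¹ + ((m+1).factorial : ℝ)⁻¹) * ‖j f - f z0 • u‖ := by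
            ring
        _ ≤ (((k+1).factorial : ℝ)⁻¹ + ((m+1).factorial : ℝ)⁻¹) * (2 * ‖j f‖) :=
            mul_le_mul_of_nonneg_left (hsub f) (by positivity)
  have hopnorm : ∀ k m : ℕ, ‖A ^ k - A ^ m‖
      ≤ 2 * (((k+1).factorial : ℝ)⁻¹ + ((m+1).factorial : ℝ)⁻¹) := by
    intro k m
    refine ContinuousLinearMap.opNorm_le_bound _ (by positivity) fun x => ?_
    rw [ContinuousLinearMap.sub_apply]
    calc ‖(A ^ k) x - (A ^ m) x‖
        ≤ (((k+1).factorial : ℝ)⁻¹ + ((m+1).factorial : ℝ)⁻¹) * (2 * ‖x‖) := hptwise k m x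
      _ = 2 * (((k+1).factorial : ℝ)⁻¹ + ((m+1).factorial : ℝ)⁻¹) * ‖x‖ := by ring
  have hcauchy : CauchySeq (fun k : ℕ => A ^ k) := by
    apply cauchySeq_of_le_tendsto_0 (fun N : ℕ => 4 * ((N+1).factorial : ℝ)⁻¹)
    · intro n m N hn hm
      rw [dist_eq_norm]
      refine (hopnorm n m).trans ?_
      have h1 := fact_inv_anti hn
      have h2 := fact_inv_anti hm
      linarith
    · simpa using fact_inv_tendsto.const_mul (4:ℝ)
  obtain ⟨Q, hQ⟩ := cauchySeq_tendsto_of_complete hcauchy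
  have hQpt : ∀ x : X, Tendsto (fun k : ℕ => (A ^ k) x) atTop (nhds (Q x)) := by
    intro x
    rw [tendsto_iff_norm_sub_tendsto_zero]
    refine squeeze_zero (g := fun k => ‖A ^ k - Q‖ * ‖x‖) (fun k => norm_nonneg _) (fun k => ?_) ?_
    · show ‖(A ^ k) x - Q x‖ ≤ ‖A ^ k - Q‖ * ‖x‖
      simpa [ContinuousLinearMap.sub_apply] using (A ^ k - Q).le_opNorm x
    · have := tendsto_iff_norm_sub_tendsto_zero.mp hQ
      simpa using this.mul_const ‖x‖
  have hQj : ∀ f : X0, Q (j f) = f z0 • u := by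
    intro f
    refine tendsto_nhds_unique (hQpt (j f)) ?_
    rw [tendsto_iff_norm_sub_tendsto_zero]
    refine squeeze_zero (fun k => norm_nonneg _)
      (fun k => ?_) (by simpa using fact_inv_tendsto.mul_const ‖j f - f z0 • u‖)
    have e1 : (A ^ k) (j f) - f z0 • u = (A ^ k) (j f - f z0 • u) := by
      simp only [map_sub, map_smul, hAku]
    rw [e1]
    exact hcore f k
  have hQu : Q u = u := by
    have := hQj 1
    simpa using this
  have hshift : ∀ x : X, Tendsto (fun k : ℕ => (A ^ (k+1)) x) atTop (nhds (Q x)) := by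
    intro x
    have := (hQpt x).comp (tendsto_add_atTop_nat 1)
    exact this
  have hAQ : A * Q = Q := by
    ext x
    rw [ContinuousLinearMap.mul_apply]
    refine tendsto_nhds_unique ?_ (hshift x)
    have h1 : Tendsto (fun k : ℕ => A ((A ^ k) x)) atTop (nhds (A (Q x))) :=
      (A.continuous.tendsto (Q x)).comp (hQpt x)
    have e : (fun k : ℕ => A ((A ^ k) x)) = fun k : ℕ => (A ^ (k+1)) x := by
      funext k
      rw [pow_succ', ContinuousLinearMap.mul_apply]
    rwa [e] at h1
  have hQA : Q * A = Q := by
    ext x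
    rw [ContinuousLinearMap.mul_apply]
    refine tendsto_nhds_unique ?_ (hshift x)
    have h1 := hQpt (A x)
    have e : (fun k : ℕ => (A ^ k) (A x)) = fun k : ℕ => (A ^ (k+1)) x := by
      funext k
      rw [pow_succ, ContinuousLinearMap.mul_apply]
    rwa [e] at h1
  have hQAk : ∀ k : ℕ, Q * A ^ k = Q := by
    intro k
    induction k with
    | zero => simp
    | succ k ih => rw [pow_succ, ← mul_assoc, ih, hQA]
  have hQQ : Q * Q = Q := by
    ext x
    rw [ContinuousLinearMap.mul_apply]
    have h1 : Tendsto (fun k : ℕ => Q ((A ^ k) x)) atTop (nhds (Q (Q x))) :=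
      (Q.continuous.tendsto (Q x)).comp (hQpt x)
    have e : (fun k : ℕ => Q ((A ^ k) x)) = fun _ : ℕ => Q x := by
      funext k
      rw [← ContinuousLinearMap.mul_apply, hQAk]
    rw [e] at h1
    exact tendsto_nhds_unique h1 tendsto_const_nhds
  -- quasinilpotent bound on the complement of Q
  have hAkEx : ∀ (k : ℕ) (x : X),
      ‖(A ^ k) (x - Q x)‖ ≤ ((k+1).factorial : ℝ)⁻¹ * ‖x - Q x‖ := by
    intro k x
    refine hjdense.induction_on x ?_ ?_
    · apply isClosed_le
      · exact ((A ^ k).continuous.comp (continuous_id.sub Q.continuous)).norm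
      · exact continuous_const.mul ((continuous_id.sub Q.continuous).norm)
    · intro f
      rw [hQj f]
      exact hcore f k
  -- eigenvector statement
  have span_closed : IsClosed ((Submodule.span ℝ {u} : Submodule ℝ X) : Set X) :=
    Submodule.closed_of_finiteDimensional _
  have hQmem : ∀ x : X, Q x ∈ Submodule.span ℝ {u} := by
    intro x
    have hx : x ∈ closure (Set.range j) := hjdense x
    have h1 : Q x ∈ closure ((Submodule.span ℝ {u} : Submodule ℝ X) : Set X) := by
      refine map_mem_closure Q.continuous hx ?_
      rintro y ⟨f, rfl⟩
      rw [hQj]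
      exact Submodule.smul_mem _ _ (Submodule.mem_span_singleton_self u)
    rwa [span_closed.closure_eq] at h1
  have heig : ∀ x : X, A x = x ↔ ∃ c : ℝ, x = c • u := by
    intro x
    constructor
    · intro hx
      have hk : ∀ k : ℕ, (A ^ k) x = x := by
        intro k
        induction k with
        | zero => simp
        | succ k ih => rw [pow_succ, ContinuousLinearMap.mul_apply, hx, ih]
      have h1 : Tendsto (fun k : ℕ => (A ^ k) x) atTop (nhds x) := by
        simpa [hk] using (tendsto_const_nhds : Tendsto (fun _ : ℕ => x) atTop (nhds x))
      have hxQ : x = Q x := tendsto_nhds_unique h1 (hQpt x)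
      obtain ⟨c, hc⟩ := Submodule.mem_span_singleton.mp (hQmem x)
      exact ⟨c, by rw [hxQ, ← hc]⟩
    · rintro ⟨c, rfl⟩
      rw [map_smul, hA1]
  -- injectivity helper
  have hinj : ∀ D : X →L[ℝ] X, IsUnit D → ∀ x : X, D x = 0 → x = 0 := by
    rintro D ⟨w, rfl⟩ x hx
    have h1 : ((↑w⁻¹ * ↑w : X →L[ℝ] X)) x = x := by
      rw [Units.inv_mul]
      rfl
    rw [ContinuousLinearMap.mul_apply, hx, map_zero] at h1
    exact h1.symm
  -- 0 and 1 are in the spectrum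
  have mem0 : (0:ℝ) ∈ spectrum ℝ A := by
    rw [spectrum.mem_iff]
    intro hunit
    have hf0c : A (j f0) = 0 := by
      rw [hA, f0_comp phic hphic, map_zero]
    have hD : ((algebraMap ℝ (X →L[ℝ] X)) 0 - A) (j f0) = 0 := by
      rw [map_zero, zero_sub, ContinuousLinearMap.neg_apply, hf0c, neg_zero]
    have := hinj _ hunit _ hD
    have hn : ‖j f0‖ = 0 := by rw [this, norm_zero]
    rw [hjiso] at hn
    linarith [one_le_tnorm_f0]
  have mem1 : (1:ℝ) ∈ spectrum ℝ A := by
    rw [spectrum.mem_iff]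
    intro hunit
    have hD : ((algebraMap ℝ (X →L[ℝ] X)) 1 - A) u = 0 := by
      rw [ContinuousLinearMap.sub_apply, Algebra.algebraMap_eq_smul_one,
        ContinuousLinearMap.smul_apply, ContinuousLinearMap.one_apply, one_smul,
        hA1, sub_self]
    exact hune (hinj _ hunit _ hD)
  -- resolvent construction for lam ∉ {0,1}
  have hres : ∀ lam : ℝ, lam ≠ 0 → lam ≠ 1 → lam ∉ spectrum ℝ A := by
    intro lam hl0 hl1
    rw [spectrum.notMem_iff]
    set E : X →L[ℝ] X := 1 - Q with hE_def
    have hAkEnorm : ∀ k : ℕ, ‖A ^ k * E‖ ≤ ((k+1).factorial : ℝ)⁻¹ * ‖E‖ := by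
      intro k
      refine ContinuousLinearMap.opNorm_le_bound _ (by positivity) fun x => ?_
      rw [ContinuousLinearMap.mul_apply]
      have hEx : E x = x - Q x := by
        rw [hE_def, ContinuousLinearMap.sub_apply, ContinuousLinearMap.one_apply]
      rw [hEx]
      calc ‖(A ^ k) (x - Q x)‖ ≤ ((k+1).factorial : ℝ)⁻¹ * ‖x - Q x‖ := hAkEx k x
        _ = ((k+1).factorial : ℝ)⁻¹ * ‖E x‖ := by rw [hEx]
        _ ≤ ((k+1).factorial : ℝ)⁻¹ * (‖E‖ * ‖x‖) :=
            mul_le_mul_of_nonneg_left (E.le_opNorm x) (by positivity)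
        _ = ((k+1).factorial : ℝ)⁻¹ * ‖E‖ * ‖x‖ := by ring
    set s : ℕ → (X →L[ℝ] X) := fun k => (lam⁻¹)^(k+1) • (A ^ k * E) with hs_def
    have hsum : Summable s := by
      refine Summable.of_norm_bounded
        (g := fun k => |lam⁻¹| ^ (k+1) / ((k+1).factorial : ℝ) * ‖E‖) ?_ ?_
      · have h0 : Summable (fun k : ℕ => |lam⁻¹| ^ k / (k.factorial : ℝ)) :=
          Real.summable_pow_div_factorial _
        have h1 : Summable (fun k : ℕ => |lam⁻¹| ^ (k+1) / ((k+1).factorial : ℝ)) :=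
          (summable_nat_add_iff 1).mpr h0
        exact h1.mul_right ‖E‖
      · intro k
        show ‖(lam⁻¹)^(k+1) • (A ^ k * E)‖
          ≤ |lam⁻¹| ^ (k+1) / ((k+1).factorial : ℝ) * ‖E‖
        calc ‖(lam⁻¹)^(k+1) • (A ^ k * E)‖
            ≤ ‖(lam⁻¹)^(k+1)‖ * ‖A ^ k * E‖ := (A ^ k * E).opNorm_smul_le _
          _ = |lam⁻¹| ^ (k+1) * ‖A ^ k * E‖ := by
              rw [norm_pow, Real.norm_eq_abs]
          _ ≤ |lam⁻¹| ^ (k+1) * (((k+1).factorial : ℝ)⁻¹ * ‖E‖) :=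
              mul_le_mul_of_nonneg_left (hAkEnorm k) (by positivity)
          _ = |lam⁻¹| ^ (k+1) / ((k+1).factorial : ℝ) * ‖E‖ := by
              rw [div_eq_mul_inv]; ring
    set T : X →L[ℝ] X := ∑' k, s k with hT_def
    have hT : HasSum s T := hsum.hasSum
    set g : ℕ → (X →L[ℝ] X) := fun k => (lam⁻¹)^k • (A ^ k * E) with hg_def
    have hg0 : g 0 = E := by simp [hg_def]
    have hterm1 : ∀ k, lam • s k = g k := by
      intro k
      rw [hs_def, hg_def, smul_smul]
      congr 1
      rw [pow_succ, mul_comm ((lam⁻¹)^k), ← mul_assoc, mul_inv_cancel₀ hl0, one_mul]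
    have h1 : HasSum g (lam • T) := by
      have := hT.const_smul lam
      simpa [hterm1] using this
    have h3 : HasSum (fun k => g (k+1)) (lam • T - g 0) := by
      refine (hasSum_nat_add_iff 1).mpr ?_
      simpa using h1
    have h2 : HasSum (fun k => g (k+1)) (A * T) := by
      have h := hT.mul_left A
      have hterm2 : ∀ k, A * s k = g (k+1) := by
        intro k
        rw [hs_def, hg_def, mul_smul_comm]
        congr 1
        rw [← mul_assoc, ← pow_succ']
      simpa [hterm2] using h
    have hAT : A * T = lam • T - E := by
      rw [← hg0]
      exact h2.unique h3
    have hEA : E * A = A * E := by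
      rw [hE_def, sub_mul, mul_sub, one_mul, mul_one, hQA, hAQ]
    have h2' : HasSum (fun k => g (k+1)) (T * A) := by
      have h := hT.mul_right A
      have hterm3 : ∀ k, s k * A = g (k+1) := by
        intro k
        rw [hs_def, hg_def, smul_mul_assoc]
        congr 1
        rw [mul_assoc, hEA, ← mul_assoc, ← pow_succ]
      simpa [hterm3] using h
    have hTA : T * A = lam • T - E := by
      rw [← hg0]
      exact h2'.unique h3
    set D : X →L[ℝ] X := lam • 1 - A with hD_def
    have hl1' : lam - 1 ≠ 0 := sub_ne_zero.mpr hl1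
    set B : X →L[ℝ] X := T + (lam - 1)⁻¹ • Q with hB_def
    have hDT : D * T = E := by
      rw [hD_def, sub_mul, smul_mul_assoc, one_mul, hAT]
      abel
    have hTD : T * D = E := by
      rw [hD_def, mul_sub, mul_smul_comm, mul_one, hTA]
      abel
    have hDQ : D * Q = (lam - 1) • Q := by
      rw [hD_def, sub_mul, smul_mul_assoc, one_mul, hAQ, sub_smul, one_smul]
    have hQD : Q * D = (lam - 1) • Q := by
      rw [hD_def, mul_sub, mul_smul_comm, mul_one, hQA, sub_smul, one_smul]
    have hDB : D * B = 1 := by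
      rw [hB_def, mul_add, hDT, mul_smul_comm, hDQ, smul_smul,
        inv_mul_cancel₀ hl1', one_smul, hE_def, sub_add_cancel]
    have hBD : B * D = 1 := by
      rw [hB_def, add_mul, hTD, smul_mul_assoc, hQD, smul_smul,
        inv_mul_cancel₀ hl1', one_smul, hE_def, sub_add_cancel]
    have halg : (algebraMap ℝ (X →L[ℝ] X)) lam - A = D := by
      rw [Algebra.algebraMap_eq_smul_one, hD_def]
    rw [halg]
    exact ⟨⟨D, B, hDB, hBD⟩, rfl⟩
  constructor
  · apply Set.Subset.antisymm
    · intro lam hlam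
      by_contra hne
      simp only [Set.mem_insert_iff, Set.mem_singleton_iff, not_or] at hne
      exact hres lam hne.1 hne.2 hlam
    · intro lam hlam
      rcases hlam with h | h
      · rw [h]; exact mem0
      · rw [Set.mem_singleton_iff] at h
        rw [h]; exact mem1
  · exact heig
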